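/- Let p be a prime, r = p^t with t ≥ 1 an integer. The formal Laurent series Θ₂ = Σ_{n≥0} T^{-r^n} in the field F_p((T^{-1})) of power series in 1/T over F_p satisfies Θ₂ = 1/T + Θ₂^r, and Θ₂ is algebraic over the rational function field F_p(T) of degree exactly r. -/

import Mathlib

open Polynomial in
/-- Coefficients of a `p ^ t`-th power of a power series over `ZMod p`. -/
lemma ps_coeff_pow_char (p : ℕ) [Fact p.Prime] (t : ℕ) (f : PowerSeries (ZMod p)) (n : ℕ) :
    PowerSeries.coeff (R := ZMod p) n (f ^ p ^ t)
      = if p ^ t ∣ n then PowerSeries.coeff (R := ZMod p) (n / p ^ t) f else 0 := by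
  have hq : 0 < p ^ t := pow_pos (Fact.out : p.Prime).pos t
  set q := p ^ t with hqdef
  set P : Polynomial (ZMod p) := PowerSeries.trunc (n + 1) f with hP
  have hcoeffP : ∀ i ≤ n, PowerSeries.coeff (R := ZMod p) i (f - ↑P) = 0 := by
    intro i hi
    rw [map_sub, Polynomial.coeff_coe, hP, PowerSeries.coeff_trunc,
      if_pos (Nat.lt_succ_of_le hi), sub_self]
  have hagree : PowerSeries.coeff (R := ZMod p) n (f ^ q)
      = PowerSeries.coeff (R := ZMod p) n ((P : PowerSeries (ZMod p)) ^ q) := by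
    obtain ⟨c, hc⟩ := sub_dvd_pow_sub_pow f (↑P) q
    have h0 : PowerSeries.coeff (R := ZMod p) n ((f - ↑P) * c) = 0 := by
      rw [PowerSeries.coeff_mul]
      refine Finset.sum_eq_zero fun x hx => ?_
      rw [Finset.HasAntidiagonal.mem_antidiagonal] at hx
      rw [hcoeffP x.1 (le_of_add_le_left hx.le), zero_mul]
    have h1 := congrArg (PowerSeries.coeff (R := ZMod p) n) hc
    rw [map_sub, h0] at h1
    exact sub_eq_zero.mp h1
  have hPq : P ^ q = Polynomial.expand (ZMod p) q P := by
    have h := Polynomial.map_iterateFrobenius_expand (R := ZMod p) p P t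
    have hid : iterateFrobenius (ZMod p) p t = RingHom.id (ZMod p) := by
      ext x; rw [iterateFrobenius_def, ZMod.pow_card_pow, RingHom.id_apply]
    rw [hid, Polynomial.map_id] at h
    exact h.symm
  rw [hagree, ← Polynomial.coe_pow, hPq, Polynomial.coeff_coe,
    Polynomial.coeff_expand hq, hP]
  by_cases hdvd : q ∣ n
  · rw [if_pos hdvd, if_pos hdvd, PowerSeries.coeff_trunc,
      if_pos (Nat.lt_succ_of_le (Nat.div_le_self n q))]
  · rw [if_neg hdvd, if_neg hdvd]

open Classical in
/-- The functional equation for `Θ₂` at the level of power series. -/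
lemma theta_ps_eq (p : ℕ) [Fact p.Prime] (t : ℕ) (ht : 1 ≤ t) :
    (PowerSeries.mk fun k => if ∃ n : ℕ, k = (p ^ t) ^ n then (1 : ZMod p) else 0)
      = PowerSeries.X +
        (PowerSeries.mk fun k => if ∃ n : ℕ, k = (p ^ t) ^ n then (1 : ZMod p) else 0)
          ^ p ^ t := by
  have hp2 : 2 ≤ p := (Fact.out : p.Prime).two_le
  have hr2 : 2 ≤ p ^ t := le_trans hp2 (Nat.le_self_pow (by omega) p)
  set r := p ^ t with hrdef
  ext k
  rw [map_add, PowerSeries.coeff_X, PowerSeries.coeff_mk, ps_coeff_pow_char, ← hrdef]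
  by_cases h : ∃ n : ℕ, k = r ^ n
  · obtain ⟨m, rfl⟩ := h
    rw [if_pos ⟨m, rfl⟩]
    cases m with
    | zero =>
      rw [pow_zero, if_pos rfl, if_neg (by rw [Nat.dvd_one]; omega : ¬ r ∣ 1), add_zero]
    | succ m =>
      have hk1 : r ^ (m + 1) ≠ 1 := by
        have : r ≤ r ^ (m + 1) := Nat.le_self_pow (by omega) r
        omega
      have hdvd : r ∣ r ^ (m + 1) := dvd_pow_self r (Nat.succ_ne_zero m)
      rw [if_neg hk1, if_pos hdvd, PowerSeries.coeff_mk, zero_add,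
        if_pos ⟨m, by rw [pow_succ, Nat.mul_div_cancel _ (by omega : 0 < r)]⟩]
  · rw [if_neg h, if_neg (fun hk : k = 1 => h ⟨0, by simp [hk]⟩), zero_add]
    by_cases hd : r ∣ k
    · rw [if_pos hd, PowerSeries.coeff_mk, if_neg]
      rintro ⟨n, hn⟩
      exact h ⟨n + 1, by rw [pow_succ, ← hn, Nat.div_mul_cancel hd]⟩
    · rw [if_neg hd]

noncomputable section SwapEquiv
open Polynomial
variable (F : Type*) [CommRing F]

/-- The inclusion `F[X] → F[X][Y]` sending the variable to the *outer* variable. -/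
def innerH : F[X] →+* F[X][X] := eval₂RingHom (C.comp C) X

/-- The ring endomorphism of `F[X][Y]` swapping the two variables. -/
def tau : F[X][X] →+* F[X][X] := eval₂RingHom (innerH F) (C X)

lemma tau_comp : (tau F).comp (tau F) = RingHom.id F[X][X] := by
  have key : (tau F).comp (innerH F) = (C : F[X] →+* F[X][X]) := by
    apply ringHom_ext
    · intro c
      simp [tau, innerH, coe_eval₂RingHom, eval₂_C, eval₂_X]
    · simp [tau, innerH, coe_eval₂RingHom, eval₂_C, eval₂_X]
  apply ringHom_ext
  · intro a
    have h : tau F (C a) = innerH F a := by simp [tau, coe_eval₂RingHom, eval₂_C]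
    simp only [RingHom.coe_comp, Function.comp_apply, h, RingHom.id_apply]
    exact DFunLike.congr_fun key a
  · simp [tau, innerH, coe_eval₂RingHom, eval₂_C, eval₂_X]

/-- The ring automorphism of `F[X][Y]` swapping the two variables. -/
def swapEquiv : F[X][X] ≃+* F[X][X] :=
  RingEquiv.ofRingHom (tau F) (tau F) (tau_comp F) (tau_comp F)

/-- Irreducibility of `Y ^ r - Y + X` over `F[X]`. -/
lemma irr_artin [IsDomain F] (r : ℕ) :
    Irreducible (X ^ r - X + C X : F[X][X]) := by
  have h : swapEquiv F (X ^ r - X + C X : F[X][X]) = X - C (X - X ^ r) := by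
    show tau F _ = _
    simp only [map_add, map_sub, map_pow]
    simp only [tau, innerH, coe_eval₂RingHom, eval₂_C, eval₂_X]
    ring
  exact (MulEquiv.irreducible_iff (swapEquiv F)).mp (by rw [h]; exact irreducible_X_sub_C _)

end SwapEquiv

open scoped RatFunc

open Polynomial in
/-- The algebraicity and degree statement, for an abstract element satisfying the
functional equation. -/
lemma alg_of_eq (p : ℕ) [Fact p.Prime] (r : ℕ) (hr2 : 2 ≤ r) (θ : LaurentSeries (ZMod p))
    (h1 : θ = HahnSeries.single (1 : ℤ) 1 + θ ^ r) :
    IsAlgebraic (RatFunc (ZMod p)) θ ∧ (minpoly (RatFunc (ZMod p)) θ).natDegree = r := by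
  set q : (RatFunc (ZMod p))[X] := X ^ r - X + C RatFunc.X with hq
  have hmonic : q.Monic := by
    rw [hq]
    monicity!
    simp [show 1 ≤ r by omega, show ¬(r ≤ 1) by omega]
  have hdeg : q.natDegree = r := by
    rw [hq]
    compute_degree!
    · simp [show ¬(1 = r) by omega, show r ≠ 0 by omega]
    · omega
  have hX : algebraMap (RatFunc (ZMod p)) (LaurentSeries (ZMod p)) RatFunc.X
      = HahnSeries.single (1 : ℤ) 1 := RatFunc.coe_X
  have haeval : aeval θ q = 0 := by
    simp only [hq, map_add, map_sub, map_pow, aeval_X, aeval_C, hX]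
    linear_combination -h1
  have hmap : (X ^ r - X + C Polynomial.X : (Polynomial (ZMod p))[X]).map
      (algebraMap (Polynomial (ZMod p)) (RatFunc (ZMod p))) = q := by
    simp [hq, Polynomial.map_add, Polynomial.map_sub, Polynomial.map_pow,
      RatFunc.algebraMap_X]
  have hq₀monic : (X ^ r - X + C Polynomial.X : (Polynomial (ZMod p))[X]).Monic := by
    monicity!
    simp [show 1 ≤ r by omega, show ¬(r ≤ 1) by omega]
  have hirr : Irreducible q := by
    have := (Polynomial.IsPrimitive.irreducible_iff_irreducible_map_fraction_map
      (K := RatFunc (ZMod p)) hq₀monic.isPrimitive).mp (irr_artin (ZMod p) r)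
    rwa [hmap] at this
  have hmin : minpoly (RatFunc (ZMod p)) θ = q :=
    (minpoly.eq_of_irreducible_of_monic hirr haeval hmonic).symm
  exact ⟨⟨q, hmonic.ne_zero, haeval⟩, by rw [hmin, hdeg]⟩

/-- The Laurent series `Θ₂ = Σ_{n ≥ 0} T^{-r^n}` in `F_p((T⁻¹))`, where the field
`F_p((T⁻¹))` of power series in `1/T` is realized as `LaurentSeries (ZMod p)`, the
variable `X` of the Laurent series corresponding to `X = 1/T` (so `T^{-r^n} = X^{r^n}`). -/
noncomputable def theta2 (p r : ℕ) : LaurentSeries (ZMod p) :=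
  open Classical in
  ((PowerSeries.mk fun k => if ∃ n : ℕ, k = r ^ n then 1 else 0 : PowerSeries (ZMod p)) :
    LaurentSeries (ZMod p))

open scoped RatFunc

/-- `Θ₂` satisfies `Θ₂ = 1/T + Θ₂^r` (here `1/T` is `HahnSeries.single 1 1`, i.e. `X`),
and `Θ₂` is algebraic over the rational function field `F_p(T) = F_p(X)` of degree
exactly `r`, where `r = p^t` with `t ≥ 1`. -/
theorem stmt7 (p : ℕ) [Fact p.Prime] (t : ℕ) (ht : 1 ≤ t) :
    theta2 p (p ^ t) = HahnSeries.single (1 : ℤ) 1 + theta2 p (p ^ t) ^ p ^ t ∧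
    IsAlgebraic (RatFunc (ZMod p)) (theta2 p (p ^ t)) ∧
    (minpoly (RatFunc (ZMod p)) (theta2 p (p ^ t))).natDegree = p ^ t := by
  have hp2 : 2 ≤ p := (Fact.out : p.Prime).two_le
  have hr2 : 2 ≤ p ^ t := le_trans hp2 (Nat.le_self_pow (by omega) p)
  have h1 : theta2 p (p ^ t)
      = HahnSeries.single (1 : ℤ) 1 + theta2 p (p ^ t) ^ p ^ t := by
    have := congrArg (fun x : PowerSeries (ZMod p) => (x : LaurentSeries (ZMod p)))
      (theta_ps_eq p t ht)
    simp only [PowerSeries.coe_add, PowerSeries.coe_pow, PowerSeries.coe_X] at this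
    exact this
  obtain ⟨halg, hdeg⟩ := alg_of_eq p (p ^ t) hr2 (theta2 p (p ^ t)) h1
  exact ⟨h1, halg, hdeg⟩
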